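/- In 𝔰𝔩₄(ℝ), let 𝔞 be the diagonal traceless matrices and bₙ = exp(n(E₁₂ + E₂₃ + E₃₄)). Then the sequence Ad bₙ(𝔞) converges in the Grassmannian Gr₃(𝔰𝔩₄(ℝ)) to the abelian subalgebra 𝔩_{[1:1:1]} = span{E₁₂ + E₂₃ + E₃₄, E₁₃ + E₂₄, E₁₄}. -/

import Mathlib

open Matrix Filter

noncomputable section

/-- Convergence of a sequence of subspaces (given as subsets of the ambient space) to a
limit subspace, in the Kuratowski sense; for subspaces of a fixed finite dimension this
is exactly convergence in the Grassmannian. -/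
def GrLimit {M : Type*} [TopologicalSpace M] (W : ℕ → Set M) (L : Set M) : Prop :=
  (∀ v ∈ L, ∃ u : ℕ → M, (∀ n, u n ∈ W n) ∧ Tendsto u atTop (nhds v)) ∧
  (∀ φ : ℕ → ℕ, StrictMono φ → ∀ u : ℕ → M, (∀ n, u n ∈ W (φ n)) →
    ∀ v : M, Tendsto u atTop (nhds v) → v ∈ L)

/-- Elementary matrix `Eᵢⱼ` in `M₄(ℝ)`. -/
def E (i j : Fin 4) : Matrix (Fin 4) (Fin 4) ℝ := Matrix.single i j 1

/-- `U = E₁₂ + E₂₃ + E₃₄`. -/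
def U : Matrix (Fin 4) (Fin 4) ℝ := E 0 1 + E 1 2 + E 2 3

/-- `bₙ = exp(nU)`, computed via the (terminating) exponential series of the nilpotent
matrix `nU`. -/
def b (n : ℕ) : Matrix (Fin 4) (Fin 4) ℝ :=
  1 + (n : ℝ) • U + ((n : ℝ) ^ 2 / 2) • (U * U) + ((n : ℝ) ^ 3 / 6) • (U * U * U)

/-- The Cartan subspace `𝔞` of diagonal traceless matrices, as a set. -/
def diagSet : Set (Matrix (Fin 4) (Fin 4) ℝ) :=
  {D | (∀ i j : Fin 4, i ≠ j → D i j = 0) ∧ Matrix.trace D = 0}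

/-! ### Auxiliary computations -/

def Bmat (t : ℝ) : Matrix (Fin 4) (Fin 4) ℝ :=
  !![1,t,t^2/2,t^3/6; 0,1,t,t^2/2; 0,0,1,t; 0,0,0,1]

lemma U_eq : U = !![0,1,0,0;0,0,1,0;0,0,0,1;(0:ℝ),0,0,0] := by
  ext i j; fin_cases i <;> fin_cases j <;>
    simp [U, E, Matrix.single, Matrix.vecHead, Matrix.vecTail]

lemma b_eq (n : ℕ) : b n = Bmat n := by
  rw [b, U_eq]
  ext i j; fin_cases i <;> fin_cases j <;>
    simp [Bmat, Matrix.mul_apply, Fin.sum_univ_four, Matrix.one_apply,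
      Matrix.vecHead, Matrix.vecTail] <;> ring

lemma Bmat_mul_neg (t : ℝ) : Bmat t * Bmat (-t) = 1 := by
  ext i j; fin_cases i <;> fin_cases j <;>
    simp [Bmat, Matrix.mul_apply, Fin.sum_univ_four, Matrix.one_apply,
      Matrix.vecHead, Matrix.vecTail] <;> ring

lemma b_inv (n : ℕ) : (b n)⁻¹ = Bmat (-(n:ℝ)) := by
  apply Matrix.inv_eq_right_inv
  rw [b_eq]; exact Bmat_mul_neg _

/-- The conjugate `exp(tU) D exp(-tU)` of a diagonal matrix, explicitly. -/
def Cmat (t : ℝ) (d : Fin 4 → ℝ) : Matrix (Fin 4) (Fin 4) ℝ :=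
  !![d 0, t*(d 1 - d 0), t^2/2*(d 0 - 2*d 1 + d 2), t^3/6*(-(d 0) + 3*d 1 - 3*d 2 + d 3);
     0, d 1, t*(d 2 - d 1), t^2/2*(d 1 - 2*d 2 + d 3);
     0, 0, d 2, t*(d 3 - d 2);
     0, 0, 0, d 3]

lemma diag_eq (d : Fin 4 → ℝ) :
    Matrix.diagonal d = !![d 0,0,0,0; 0,d 1,0,0; 0,0,d 2,0; 0,0,0,d 3] := by
  ext i j; fin_cases i <;> fin_cases j <;>
    simp [Matrix.diagonal, Matrix.vecHead, Matrix.vecTail]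

lemma Bmat_mul_diag (t : ℝ) (d : Fin 4 → ℝ) :
    Bmat t * Matrix.diagonal d =
      !![d 0, t*d 1, t^2/2*d 2, t^3/6*d 3;
         0, d 1, t*d 2, t^2/2*d 3;
         0, 0, d 2, t*d 3;
         0, 0, 0, d 3] := by
  rw [diag_eq]
  ext i j; fin_cases i <;> fin_cases j <;>
    simp [Bmat, Matrix.mul_apply, Fin.sum_univ_four, Matrix.vecHead, Matrix.vecTail] <;> ring

lemma conj_eq (n : ℕ) (d : Fin 4 → ℝ) :
    b n * Matrix.diagonal d * (b n)⁻¹ = Cmat (n:ℝ) d := by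
  rw [b_inv, b_eq, Bmat_mul_diag, Bmat]
  ext i j; fin_cases i <;> fin_cases j <;>
    simp [Cmat, Matrix.mul_apply, Fin.sum_univ_four, Matrix.vecHead, Matrix.vecTail] <;> ring

lemma mem_diagSet (d : Fin 4 → ℝ) (h : d 0 + d 1 + d 2 + d 3 = 0) :
    Matrix.diagonal d ∈ diagSet := by
  refine ⟨fun i j hij => Matrix.diagonal_apply_ne d hij, ?_⟩
  rw [Matrix.trace_diagonal, Fin.sum_univ_four]; linarith

/-! ### The approximating diagonal family for Part 1 -/

/-- Diagonal entries, as polynomials in `x = 1/n`. -/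
def dv (a c d x : ℝ) : Fin 4 → ℝ :=
  ![-(3/2)*a*x - 2*c*x^2 - (9/2)*d*x^3,
    -(1/2)*a*x - 2*c*x^2 - (9/2)*d*x^3,
    (1/2)*a*x - (3/2)*d*x^3,
    (3/2)*a*x + 4*c*x^2 + (21/2)*d*x^3]

/-- The conjugated family, as a polynomial (hence continuous) function of `x = 1/n`. -/
def F (a c d x : ℝ) : Matrix (Fin 4) (Fin 4) ℝ :=
  !![dv a c d x 0, a, c + 3*d/2*x, d;
     0, dv a c d x 1, a + 2*c*x + 3*d*x^2, c + 9*d/2*x;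
     0, 0, dv a c d x 2, a + 4*c*x + 12*d*x^2;
     0, 0, 0, dv a c d x 3]

set_option maxHeartbeats 1600000 in
lemma Cmat_dv (a c d : ℝ) (n : ℕ) (hn : n ≠ 0) :
    Cmat (n:ℝ) (dv a c d (1/n)) = F a c d (1/n) := by
  have hn' : (n:ℝ) ≠ 0 := Nat.cast_ne_zero.mpr hn
  ext i j; fin_cases i <;> fin_cases j <;>
    simp [Cmat, F, dv, Matrix.vecHead, Matrix.vecTail] <;> field_simp <;> ring

lemma F_cont (a c d : ℝ) : Continuous (F a c d) := by
  apply continuous_matrix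
  intro i j; fin_cases i <;> fin_cases j <;>
    simp [F, dv, Matrix.vecHead, Matrix.vecTail] <;> fun_prop

lemma F_zero (a c d : ℝ) :
    F a c d 0 = a • U + c • (E 0 2 + E 1 3) + d • E 0 3 := by
  ext i j; fin_cases i <;> fin_cases j <;>
    simp [F, dv, U, E, Matrix.single, Matrix.vecHead, Matrix.vecTail]

/-! ### Evaluating `Cmat` entries -/

lemma Cmat_apply (t : ℝ) (d : Fin 4 → ℝ) :
    (Cmat t d 0 0 = d 0) ∧ (Cmat t d 1 1 = d 1) ∧ (Cmat t d 2 2 = d 2) ∧ (Cmat t d 3 3 = d 3) ∧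
    (Cmat t d 0 1 = t*(d 1 - d 0)) ∧ (Cmat t d 1 2 = t*(d 2 - d 1)) ∧
    (Cmat t d 2 3 = t*(d 3 - d 2)) ∧
    (Cmat t d 0 2 = t^2/2*(d 0 - 2*d 1 + d 2)) ∧
    (Cmat t d 1 3 = t^2/2*(d 1 - 2*d 2 + d 3)) ∧
    (Cmat t d 0 3 = t^3/6*(-(d 0) + 3*d 1 - 3*d 2 + d 3)) ∧
    (Cmat t d 1 0 = 0) ∧ (Cmat t d 2 0 = 0) ∧ (Cmat t d 2 1 = 0) ∧
    (Cmat t d 3 0 = 0) ∧ (Cmat t d 3 1 = 0) ∧ (Cmat t d 3 2 = 0) := by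
  refine ⟨?_,?_,?_,?_,?_,?_,?_,?_,?_,?_,?_,?_,?_,?_,?_,?_⟩ <;>
    simp [Cmat, Matrix.vecHead, Matrix.vecTail]

/-- `Ad bₙ(𝔞)` converges in the Grassmannian `Gr₃(𝔰𝔩₄(ℝ))` to
`𝔩_{[1:1:1]} = span{E₁₂ + E₂₃ + E₃₄, E₁₃ + E₂₄, E₁₄}`. -/
theorem stmt16 :
    GrLimit (fun n => (fun X => b n * X * (b n)⁻¹) '' diagSet)
      {M : Matrix (Fin 4) (Fin 4) ℝ | ∃ a c d : ℝ,
        M = a • U + c • (E 0 2 + E 1 3) + d • E 0 3} := by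
  constructor
  · -- Part 1
    rintro v ⟨a, c, d, rfl⟩
    refine ⟨fun n => if n = 0 then 0 else F a c d (1/n), fun n => ?_, ?_⟩
    · by_cases hn : n = 0
      · simp only [hn, if_pos rfl]
        exact ⟨0, ⟨fun i j _ => rfl, by simp⟩, by simp⟩
      · simp only [if_neg hn]
        refine ⟨Matrix.diagonal (dv a c d (1/n)), mem_diagSet _ (by simp [dv]; ring), ?_⟩
        show b n * Matrix.diagonal (dv a c d (1/n)) * (b n)⁻¹ = F a c d (1/n)
        rw [conj_eq, Cmat_dv a c d n hn]
    · have h1 : Tendsto (fun n : ℕ => F a c d (1/n)) atTop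
          (nhds (a • U + c • (E 0 2 + E 1 3) + d • E 0 3)) := by
        rw [← F_zero a c d]
        exact ((F_cont a c d).tendsto 0).comp tendsto_one_div_atTop_nhds_zero_nat
      refine Tendsto.congr' ?_ h1
      filter_upwards [eventually_ne_atTop 0] with n hn
      simp [if_neg hn]
  · -- Part 2
    intro φ hφ u hu v hv
    choose X hX hXu using hu
    set dn : ℕ → Fin 4 → ℝ := fun n i => X n i i with hdn
    have hXdiag : ∀ n, X n = Matrix.diagonal (dn n) := by
      intro n
      ext i j
      by_cases hij : i = j
      · subst hij; simp [Matrix.diagonal, hdn]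
      · rw [(hX n).1 i j hij, Matrix.diagonal_apply_ne _ hij]
    have hu_eq : ∀ n, u n = Cmat ((φ n : ℕ) : ℝ) (dn n) := by
      intro n
      have h2 : u n = b (φ n) * Matrix.diagonal (dn n) * (b (φ n))⁻¹ := by
        rw [← hXdiag n]; exact (hXu n).symm
      rw [h2, conj_eq]
    -- entrywise limits
    have hE : ∀ i j : Fin 4,
        Tendsto (fun n => Cmat ((φ n : ℕ) : ℝ) (dn n) i j) atTop (nhds (v i j)) := by
      intro i j
      have := tendsto_pi_nhds.1 (tendsto_pi_nhds.1 hv i) j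
      exact this.congr fun n => by rw [hu_eq n]
    set t : ℕ → ℝ := fun n => ((φ n : ℕ) : ℝ) with hT
    have ht : Tendsto t atTop atTop := tendsto_natCast_atTop_atTop.comp hφ.tendsto_atTop
    have hinv : Tendsto (fun n => (t n)⁻¹) atTop (nhds 0) := ht.inv_tendsto_atTop
    have htne : ∀ᶠ n in atTop, t n ≠ 0 := ht.eventually_ne_atTop 0
    -- abbreviations for entry limits
    have C := fun t d => Cmat_apply t d
    have hd0 : Tendsto (fun n => dn n 0) atTop (nhds (v 0 0)) :=
      (hE 0 0).congr fun n => ((C (t n) (dn n)).1).symm ▸ rfl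
    have hd1 : Tendsto (fun n => dn n 1) atTop (nhds (v 1 1)) :=
      (hE 1 1).congr fun n => by rw [(C (t n) (dn n)).2.1]
    have hd2 : Tendsto (fun n => dn n 2) atTop (nhds (v 2 2)) :=
      (hE 2 2).congr fun n => by rw [(C (t n) (dn n)).2.2.1]
    have hd3 : Tendsto (fun n => dn n 3) atTop (nhds (v 3 3)) :=
      (hE 3 3).congr fun n => by rw [(C (t n) (dn n)).2.2.2.1]
    have h01 : Tendsto (fun n => t n * (dn n 1 - dn n 0)) atTop (nhds (v 0 1)) :=
      (hE 0 1).congr fun n => by rw [(C (t n) (dn n)).2.2.2.2.1]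
    have h12 : Tendsto (fun n => t n * (dn n 2 - dn n 1)) atTop (nhds (v 1 2)) :=
      (hE 1 2).congr fun n => by rw [(C (t n) (dn n)).2.2.2.2.2.1]
    have h23 : Tendsto (fun n => t n * (dn n 3 - dn n 2)) atTop (nhds (v 2 3)) :=
      (hE 2 3).congr fun n => by rw [(C (t n) (dn n)).2.2.2.2.2.2.1]
    have h02 : Tendsto (fun n => (t n)^2/2*(dn n 0 - 2*dn n 1 + dn n 2)) atTop (nhds (v 0 2)) :=
      (hE 0 2).congr fun n => by rw [(C (t n) (dn n)).2.2.2.2.2.2.2.1]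
    have h13 : Tendsto (fun n => (t n)^2/2*(dn n 1 - 2*dn n 2 + dn n 3)) atTop (nhds (v 1 3)) :=
      (hE 1 3).congr fun n => by rw [(C (t n) (dn n)).2.2.2.2.2.2.2.2.1]
    have h03 : Tendsto (fun n => (t n)^3/6*(-(dn n 0) + 3*dn n 1 - 3*dn n 2 + dn n 3))
        atTop (nhds (v 0 3)) :=
      (hE 0 3).congr fun n => by rw [(C (t n) (dn n)).2.2.2.2.2.2.2.2.2.1]
    -- lower-triangular entries of v vanish
    have lz : ∀ (i j : Fin 4), (∀ (s : ℝ) (e : Fin 4 → ℝ), Cmat s e i j = 0) → v i j = 0 :=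
      fun i j h => tendsto_nhds_unique (hE i j)
        (tendsto_const_nhds.congr fun n => (h _ _).symm)
    have l10 : v 1 0 = 0 := lz 1 0 fun s e => by simp [Cmat, Matrix.vecHead, Matrix.vecTail]
    have l20 : v 2 0 = 0 := lz 2 0 fun s e => by simp [Cmat, Matrix.vecHead, Matrix.vecTail]
    have l21 : v 2 1 = 0 := lz 2 1 fun s e => by simp [Cmat, Matrix.vecHead, Matrix.vecTail]
    have l30 : v 3 0 = 0 := lz 3 0 fun s e => by simp [Cmat, Matrix.vecHead, Matrix.vecTail]
    have l31 : v 3 1 = 0 := lz 3 1 fun s e => by simp [Cmat, Matrix.vecHead, Matrix.vecTail]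
    have l32 : v 3 2 = 0 := lz 3 2 fun s e => by simp [Cmat, Matrix.vecHead, Matrix.vecTail]
    -- dividing by t kills limits
    have small : ∀ (g : ℕ → ℝ) (w : ℝ), Tendsto g atTop (nhds w) →
        Tendsto (fun n => (t n)⁻¹ * g n) atTop (nhds 0) := fun g w h => by
      simpa using hinv.mul h
    -- diagonal differences tend to 0
    have e10 : v 1 1 - v 0 0 = 0 := by
      refine tendsto_nhds_unique (hd1.sub hd0) ?_
      refine Tendsto.congr' ?_ (small _ _ h01)
      filter_upwards [htne] with n hn
      field_simp
    have e21 : v 2 2 - v 1 1 = 0 := by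
      refine tendsto_nhds_unique (hd2.sub hd1) ?_
      refine Tendsto.congr' ?_ (small _ _ h12)
      filter_upwards [htne] with n hn
      field_simp
    have e32 : v 3 3 - v 2 2 = 0 := by
      refine tendsto_nhds_unique (hd3.sub hd2) ?_
      refine Tendsto.congr' ?_ (small _ _ h23)
      filter_upwards [htne] with n hn
      field_simp
    have esum : v 0 0 + v 1 1 + v 2 2 + v 3 3 = 0 := by
      refine tendsto_nhds_unique (((hd0.add hd1).add hd2).add hd3) ?_
      have he : (fun n => dn n 0 + dn n 1 + dn n 2 + dn n 3) = fun _ => (0:ℝ) := by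
        funext n
        have h2 := (hX n).2
        rw [Matrix.trace, Fin.sum_univ_four] at h2
        simpa [Matrix.diag] using h2
      rw [he]; exact tendsto_const_nhds
    -- first superdiagonal entries of v are equal
    have e1201 : v 1 2 - v 0 1 = 0 := by
      refine tendsto_nhds_unique (h12.sub h01) ?_
      have h := (small _ _ h02).const_mul 2
      rw [mul_zero] at h
      refine Tendsto.congr' ?_ h
      filter_upwards [htne] with n hn
      field_simp; ring
    have e2312 : v 2 3 - v 1 2 = 0 := by
      refine tendsto_nhds_unique (h23.sub h12) ?_
      have h := (small _ _ h13).const_mul 2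
      rw [mul_zero] at h
      refine Tendsto.congr' ?_ h
      filter_upwards [htne] with n hn
      field_simp; ring
    -- second superdiagonal entries of v are equal
    have e1302 : v 1 3 - v 0 2 = 0 := by
      refine tendsto_nhds_unique (h13.sub h02) ?_
      have h := (small _ _ h03).const_mul 3
      rw [mul_zero] at h
      refine Tendsto.congr' ?_ h
      filter_upwards [htne] with n hn
      field_simp; ring
    -- conclude
    refine ⟨v 0 1, v 0 2, v 0 3, ?_⟩
    ext i j
    fin_cases i <;> fin_cases j <;>
      simp [U, E, Matrix.single, Matrix.vecHead, Matrix.vecTail] <;>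
      linarith [e10, e21, e32, esum, e1201, e2312, e1302, l10, l20, l21, l30, l31, l32]
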